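/- Cayley's formula: the number of labeled trees on m+1 vertices is (m+1)^(m-1). -/

import Mathlib

open Function SimpleGraph

namespace Cayley

variable {n : ℕ}

/-- `p` converges to `r`: every vertex reaches `r` by iterating `p`. -/
def Conv (p : Fin n → Fin n) (r : Fin n) : Prop := ∀ v, ∃ k, p^[k] v = r

variable {p : Fin n → Fin n} {r : Fin n}

noncomputable def ht (hp : Conv p r) (v : Fin n) : ℕ := Nat.find (hp v)

lemma ht_spec (hp : Conv p r) (v : Fin n) : p^[ht hp v] v = r := Nat.find_spec (hp v)

lemma ht_min (hp : Conv p r) {v : Fin n} {k : ℕ} (h : p^[k] v = r) : ht hp v ≤ k :=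
  Nat.find_min' (hp v) h

lemma ht_root (hp : Conv p r) : ht hp r = 0 :=
  Nat.le_zero.mp (ht_min hp (by simp))

lemma ht_pos (hp : Conv p r) {v : Fin n} (h : v ≠ r) : 0 < ht hp v := by
  rcases Nat.eq_zero_or_pos (ht hp v) with h0 | h0
  · exact absurd (by simpa [h0] using ht_spec hp v) h
  · exact h0

lemma ht_parent (hp : Conv p r) {v : Fin n} (h : v ≠ r) : ht hp (p v) = ht hp v - 1 := by
  have h1 : ht hp (p v) ≤ ht hp v - 1 := by
    apply ht_min
    have := ht_spec hp v
    rwa [← Nat.succ_pred_eq_of_pos (ht_pos hp h), Function.iterate_succ_apply] at this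
  have h2 : ht hp v ≤ ht hp (p v) + 1 := ht_min hp (by rw [Function.iterate_succ_apply]; exact ht_spec hp (p v))
  omega

lemma eq_root_of_periodic (hfix : p r = r) (hp : Conv p r) {v : Fin n} {t : ℕ}
    (htp : 0 < t) (h : p^[t] v = v) : v = r := by
  have key : ∀ m : ℕ, p^[m * t] v = v := by
    intro m
    rw [mul_comm, Function.iterate_mul]
    exact Function.iterate_fixed h m
  set k := ht hp v with hk
  have h1 : p^[(k + 1) * t] v = v := key (k + 1)
  have hle : k ≤ (k + 1) * t := by nlinarith
  calc v = p^[(k+1)*t] v := (h1).symm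
    _ = p^[(k+1)*t - k] (p^[k] v) := by rw [← Function.iterate_add_apply]; congr 1; omega
    _ = p^[(k+1)*t - k] r := by rw [ht_spec hp v]
    _ = r := Function.iterate_fixed hfix _

lemma orbit_inj (hfix : p r = r) (hp : Conv p r) {b : Fin n} {i j : ℕ}
    (hij : i < j) (hj : j ≤ ht hp b) (h : p^[i] b = p^[j] b) : False := by
  have hper : p^[j - i] (p^[i] b) = p^[i] b := by
    rw [← Function.iterate_add_apply]
    rw [show j - i + i = j by omega]
    exact h.symm
  have := eq_root_of_periodic hfix hp (by omega : 0 < j - i) hper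
  have : ht hp b ≤ i := ht_min hp this
  omega

/-- The graph of a parent function. -/
def tgraph (p : Fin n → Fin n) (r : Fin n) : SimpleGraph (Fin n) :=
  SimpleGraph.fromRel (fun a b => a ≠ r ∧ p a = b)

lemma tgraph_adj {a b : Fin n} :
    (tgraph p r).Adj a b ↔ a ≠ b ∧ ((a ≠ r ∧ p a = b) ∨ (b ≠ r ∧ p b = a)) := by
  simp [tgraph, fromRel_adj]

lemma parent_ne_self (hfix : p r = r) (hp : Conv p r) {v : Fin n} (h : v ≠ r) : p v ≠ v := by
  intro he
  exact h (eq_root_of_periodic hfix hp one_pos (by simpa using he))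

lemma adj_parent (hfix : p r = r) (hp : Conv p r) {v : Fin n} (h : v ≠ r) :
    (tgraph p r).Adj v (p v) :=
  tgraph_adj.mpr ⟨(parent_ne_self hfix hp h).symm, Or.inl ⟨h, rfl⟩⟩

/-- The canonical walk from `v` to the root. -/
noncomputable def walkTo (hfix : p r = r) (hp : Conv p r) (v : Fin n) : (tgraph p r).Walk v r :=
  if h : v = r then h ▸ Walk.nil else Walk.cons (adj_parent hfix hp h) (walkTo hfix hp (p v))
  termination_by ht hp v
  decreasing_by
    have := ht_parent hp h
    have := ht_pos hp h
    omega

lemma walkTo_support (hfix : p r = r) (hp : Conv p r) (v : Fin n) :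
    ∀ w ∈ (walkTo hfix hp v).support, ∃ i, p^[i] v = w ∧ i ≤ ht hp v := by
  induction v using walkTo.induct hp with
  | case1 =>
    intro w hw
    rw [walkTo] at hw
    simp at hw
    exact ⟨0, by simpa using hw.symm, by omega⟩
  | case2 v h ih =>
    intro w hw
    rw [walkTo, dif_neg h, Walk.support_cons] at hw
    rcases List.mem_cons.mp hw with rfl | hw
    · exact ⟨0, rfl, by omega⟩
    · obtain ⟨i, hi, hile⟩ := ih w hw
      refine ⟨i + 1, by rw [Function.iterate_succ_apply]; exact hi, ?_⟩
      have := ht_parent hp h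
      have := ht_pos hp h
      omega

lemma walkTo_isPath (hfix : p r = r) (hp : Conv p r) (v : Fin n) :
    (walkTo hfix hp v).IsPath := by
  induction v using walkTo.induct hp with
  | case1 => rw [walkTo]; simp
  | case2 v h ih =>
    rw [walkTo, dif_neg h, Walk.cons_isPath_iff]
    refine ⟨ih, fun hmem => ?_⟩
    obtain ⟨i, hi, hile⟩ := walkTo_support hfix hp (p v) v hmem
    rw [← Function.iterate_succ_apply] at hi
    exact orbit_inj hfix hp (Nat.zero_lt_succ i)
      (by have := ht_parent hp h; have := ht_pos hp h; omega) hi.symm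

lemma walkTo_getVert_one (hfix : p r = r) (hp : Conv p r) {v : Fin n} (h : v ≠ r) :
    (walkTo hfix hp v).getVert 1 = p v := by
  rw [walkTo, dif_neg h, Walk.getVert_cons_succ, Walk.getVert_zero]

lemma tgraph_connected (hfix : p r = r) (hp : Conv p r) : (tgraph p r).Connected := by
  rw [connected_iff]
  refine ⟨fun u v => ?_, ⟨r⟩⟩
  exact (Walk.reachable (walkTo hfix hp u)).trans (Walk.reachable (walkTo hfix hp v)).symm

lemma support_getElem {V : Type*} {G : SimpleGraph V} {u v : V} (w : G.Walk u v) :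
    ∀ (i : ℕ) (hi : i < w.support.length), w.support[i] = w.getVert i := by
  induction w with
  | nil =>
    intro i hi
    simp only [Walk.support_nil, List.length_cons, List.length_nil] at hi
    have h0 : i = 0 := by omega
    subst h0
    simp [Walk.getVert]
  | cons h q ih =>
    intro i hi
    cases i with
    | zero => simp [Walk.getVert_zero]
    | succ j =>
      simp only [Walk.support_cons, List.getElem_cons_succ, Walk.getVert_cons_succ]
      exact ih j (by simpa using hi)

lemma tgraph_acyclic (hfix : p r = r) (hp : Conv p r) : (tgraph p r).IsAcyclic := by
  classical
  intro v c hc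
  obtain ⟨u, hu_mem, hu_max⟩ :=
    Finset.exists_max_image c.support.toFinset (fun w => ht hp w)
      ⟨v, by simp [Walk.start_mem_support]⟩
  rw [List.mem_toFinset] at hu_mem
  set c' := c.rotate u hu_mem with hc'
  have hcyc : c'.IsCycle := hc.rotate hu_mem
  have hlen : 3 ≤ c'.length := hcyc.three_le_length
  have hsub : ∀ w ∈ c'.support, w ∈ c.support := by
    intro w hw
    rw [Walk.support_eq_cons] at hw
    rcases List.mem_cons.mp hw with rfl | hw
    · exact hu_mem
    · exact List.mem_of_mem_tail ((Walk.support_rotate c u hu_mem).mem_iff.mp hw)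
  have hmax : ∀ w ∈ c'.support, ht hp w ≤ ht hp u := fun w hw =>
    hu_max w (List.mem_toFinset.mpr (hsub w hw))
  -- both neighbors of u in c' must equal p u
  have key : ∀ i, i < c'.length → (c'.getVert i = u ∨ c'.getVert (i+1) = u) →
      (c'.getVert i = p u ∨ c'.getVert (i+1) = p u) := by
    intro i hi hu
    have hadj := c'.adj_getVert_succ hi
    have hmem1 : c'.getVert i ∈ c'.support :=
      Walk.mem_support_iff_exists_getVert.mpr ⟨i, rfl, by omega⟩
    have hmem2 : c'.getVert (i+1) ∈ c'.support :=
      Walk.mem_support_iff_exists_getVert.mpr ⟨i+1, rfl, by omega⟩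
    rcases hu with hu | hu
    · rw [hu] at hadj
      rcases (tgraph_adj.mp hadj).2 with ⟨_, hpu⟩ | ⟨hz, hpz⟩
      · exact Or.inr hpu.symm
      · exfalso
        have h1 : ht hp (c'.getVert (i+1)) ≤ ht hp u := hmax _ hmem2
        have h2 := ht_parent hp hz
        rw [hpz] at h2
        have h3 : 0 < ht hp (c'.getVert (i+1)) := ht_pos hp hz
        omega
    · rw [hu] at hadj
      rcases (tgraph_adj.mp hadj).2 with ⟨hz, hpz⟩ | ⟨_, hpu⟩
      · exfalso
        have h1 : ht hp (c'.getVert i) ≤ ht hp u := hmax _ hmem1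
        have h2 := ht_parent hp hz
        rw [hpz] at h2
        have h3 : 0 < ht hp (c'.getVert i) := ht_pos hp hz
        omega
      · exact Or.inl hpu.symm
  have hne1 : c'.getVert 1 ≠ u := by
    have hadj := c'.adj_getVert_succ (show 0 < c'.length by omega)
    rw [c'.getVert_zero] at hadj
    exact fun he => (tgraph_adj.mp hadj).1 he.symm
  have hne2 : c'.getVert (c'.length - 1) ≠ u := by
    have hadj := c'.adj_getVert_succ (show c'.length - 1 < c'.length by omega)
    rw [show c'.length - 1 + 1 = c'.length by omega, c'.getVert_length] at hadj
    exact (tgraph_adj.mp hadj).1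
  have h1 := key 0 (by omega) (Or.inl c'.getVert_zero)
  have h2 := key (c'.length - 1) (by omega)
    (Or.inr (by rw [show c'.length - 1 + 1 = c'.length by omega]; exact c'.getVert_length))
  rw [show (0:ℕ)+1 = 1 by rfl] at h1
  rw [show c'.length - 1 + 1 = c'.length by omega, c'.getVert_length] at h2
  have hpuu : p u ≠ u := by
    intro hpu
    have hur : u = r := eq_root_of_periodic hfix hp one_pos (by simpa using hpu)
    have hgr : c'.getVert 1 = r := by
      have hm : c'.getVert 1 ∈ c'.support :=
        Walk.mem_support_iff_exists_getVert.mpr ⟨1, rfl, by omega⟩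
      have hle := hmax _ hm
      have hu0 : ht hp u = 0 := by rw [hur]; exact ht_root hp
      have h0 : p^[ht hp (c'.getVert 1)] (c'.getVert 1) = r := ht_spec hp _
      rw [show ht hp (c'.getVert 1) = 0 by omega] at h0
      simpa using h0
    exact hne1 (hgr.trans hur.symm)
  rw [c'.getVert_zero] at h1
  replace h1 : c'.getVert 1 = p u := h1.resolve_left (fun h => hpuu h.symm)
  replace h2 : c'.getVert (c'.length - 1) = p u := h2.resolve_right (fun h => hpuu h.symm)
  have hnd : c'.support.tail.Nodup := ((Walk.isCycle_def c').mp hcyc).2.2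
  have hlt : c'.support.tail.length = c'.length := by
    have := Walk.length_support c'
    simp [List.length_tail, this]
  have e1 : c'.support.tail[0]'(by omega) = c'.getVert 1 := by
    rw [List.getElem_tail, support_getElem]
  have e2 : c'.support.tail[c'.length - 2]'(by omega) = c'.getVert (c'.length - 1) := by
    rw [List.getElem_tail, support_getElem]
    congr 1
    omega
  have := hnd.getElem_inj_iff.mp (e1.trans ((h1.trans h2.symm).trans e2.symm)).symm
  omega

section TreeSide
variable {G : SimpleGraph (Fin n)}

noncomputable def pathTo (hG : G.IsTree) (r v : Fin n) : G.Walk v r :=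
  (hG.existsUnique_path v r).choose

lemma pathTo_isPath (hG : G.IsTree) (r v : Fin n) : (pathTo hG r v).IsPath :=
  (hG.existsUnique_path v r).choose_spec.1

lemma pathTo_unique (hG : G.IsTree) {r v : Fin n} {q : G.Walk v r} (hq : q.IsPath) :
    q = pathTo hG r v :=
  (hG.existsUnique_path v r).choose_spec.2 q hq

noncomputable def parentOf (hG : G.IsTree) (r : Fin n) (v : Fin n) : Fin n :=
  (pathTo hG r v).getVert 1

lemma parentOf_root (hG : G.IsTree) (r : Fin n) : parentOf hG r r = r := by
  have h := Walk.isPath_iff_eq_nil.mp (pathTo_isPath hG r r)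
  rw [parentOf, h]
  exact Walk.getVert_of_length_le _ (by simp)

lemma pathTo_not_nil (hG : G.IsTree) {r v : Fin n} (h : v ≠ r) : ¬ (pathTo hG r v).Nil := by
  rw [Walk.nil_iff_length_eq]
  intro h0
  exact h (Walk.eq_of_length_eq_zero h0)

lemma adj_parentOf (hG : G.IsTree) {r v : Fin n} (h : v ≠ r) : G.Adj v (parentOf hG r v) :=
  Walk.adj_snd (pathTo_not_nil hG h)

lemma length_parentOf (hG : G.IsTree) {r v : Fin n} (h : v ≠ r) :
    (pathTo hG r (parentOf hG r v)).length + 1 = (pathTo hG r v).length := by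
  have hnn := pathTo_not_nil hG h
  have htl : (pathTo hG r v).tail = pathTo hG r (parentOf hG r v) :=
    pathTo_unique hG ((pathTo_isPath hG r v).tail)
  rw [← htl]
  exact Walk.length_tail_add_one hnn

lemma conv_parentOf (hG : G.IsTree) (r : Fin n) : Conv (parentOf hG r) r := by
  intro v
  suffices H : ∀ (L : ℕ) (v : Fin n), (pathTo hG r v).length ≤ L →
      ∃ k, (parentOf hG r)^[k] v = r from H _ v le_rfl
  intro L
  induction L with
  | zero =>
    intro v hv
    exact ⟨0, Walk.eq_of_length_eq_zero (by omega : (pathTo hG r v).length = 0)⟩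
  | succ L ih =>
    intro v hv
    by_cases h : v = r
    · exact ⟨0, h⟩
    · obtain ⟨k, hk⟩ := ih (parentOf hG r v) (by have := length_parentOf hG (r := r) h; omega)
      exact ⟨k + 1, by rw [Function.iterate_succ_apply]; exact hk⟩

lemma tgraph_parentOf (hG : G.IsTree) (r : Fin n) : tgraph (parentOf hG r) r = G := by
  classical
  ext a b
  rw [tgraph_adj]
  constructor
  · rintro ⟨hab, ⟨h, hpa⟩ | ⟨h, hpb⟩⟩
    · rw [← hpa]; exact adj_parentOf hG h
    · rw [← hpb]; exact (adj_parentOf hG h).symm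
  · intro hadj
    refine ⟨hadj.ne, ?_⟩
    by_cases hmem : a ∈ (pathTo hG r b).support
    · -- path from b to r passes through a : then parentOf b = a
      right
      set Q := (pathTo hG r b).dropUntil a hmem with hQ
      have hQpath : Q.IsPath := (pathTo_isPath hG r b).dropUntil hmem
      have hbQ : b ∉ Q.support := by
        intro hb
        have hnd : (pathTo hG r b).support.Nodup := (pathTo_isPath hG r b).support_nodup
        have hspec := Walk.take_spec (pathTo hG r b) hmem
        have happ : (pathTo hG r b).support
            = ((pathTo hG r b).takeUntil a hmem).support ++ Q.support.tail := by
          rw [← Walk.support_append, hspec]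
        have hb1 : b ∈ ((pathTo hG r b).takeUntil a hmem).support := Walk.start_mem_support _
        have hb2 : b ∈ Q.support.tail := by
          rcases List.mem_cons.mp (by rwa [Walk.support_eq_cons] at hb) with h' | h'
          · exact absurd h'.symm hadj.ne
          · exact h'
        rw [happ] at hnd
        exact (List.disjoint_of_nodup_append hnd) hb1 hb2
      have hcons : (Walk.cons hadj.symm Q).IsPath := (Walk.cons_isPath_iff _ _).mpr ⟨hQpath, hbQ⟩
      have hbr : b ≠ r := by
        intro hbr
        subst hbr
        have := Walk.isPath_iff_eq_nil.mp hcons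
        simp at this
      refine ⟨hbr, ?_⟩
      have := pathTo_unique hG hcons
      rw [parentOf, ← this]
      simp [Walk.getVert_cons_succ, Walk.getVert_zero]
    · left
      have hcons : (Walk.cons hadj (pathTo hG r b)).IsPath :=
        (Walk.cons_isPath_iff _ _).mpr ⟨pathTo_isPath hG r b, hmem⟩
      have har : a ≠ r := by
        intro har
        subst har
        have := Walk.isPath_iff_eq_nil.mp hcons
        simp at this
      refine ⟨har, ?_⟩
      have := pathTo_unique hG hcons
      rw [parentOf, ← this]
      simp [Walk.getVert_cons_succ, Walk.getVert_zero]

end TreeSide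

lemma parentOf_tgraph (hfix : p r = r) (hp : Conv p r)
    (hG : (tgraph p r).IsTree) : parentOf hG r = p := by
  funext v
  by_cases h : v = r
  · subst h; rw [parentOf_root, hfix]
  · have huniq := pathTo_unique hG (walkTo_isPath hfix hp v)
    rw [parentOf, ← huniq, walkTo_getVert_one hfix hp h]

noncomputable def rootedEquiv (n : ℕ) :
    {x : (Fin n → Fin n) × Fin n // x.1 x.2 = x.2 ∧ Conv x.1 x.2} ≃
      {G : SimpleGraph (Fin n) // G.Connected ∧ G.IsAcyclic} × Fin n where
  toFun x := (⟨tgraph x.1.1 x.1.2,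
      tgraph_connected x.2.1 x.2.2, tgraph_acyclic x.2.1 x.2.2⟩, x.1.2)
  invFun y := ⟨(parentOf ⟨y.1.2.1, y.1.2.2⟩ y.2, y.2),
      parentOf_root _ _, conv_parentOf _ _⟩
  left_inv := by
    rintro ⟨⟨p, r⟩, hfix, hp⟩
    simp only [Subtype.mk.injEq, Prod.mk.injEq]
    exact ⟨parentOf_tgraph hfix hp _, trivial⟩
  right_inv := by
    rintro ⟨⟨G, hc, ha⟩, r⟩
    simp only [Prod.mk.injEq, Subtype.mk.injEq]
    exact ⟨tgraph_parentOf ⟨hc, ha⟩ r, trivial⟩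

open Classical in
/-- The set of periodic points of `f`. -/
noncomputable def per (f : Fin n → Fin n) : Finset (Fin n) :=
  Finset.univ.filter (fun v => ∃ t, 0 < t ∧ f^[t] v = v)

variable {f : Fin n → Fin n}

lemma mem_per {v : Fin n} : v ∈ per f ↔ ∃ t, 0 < t ∧ f^[t] v = v := by
  simp [per]

lemma per_maps {v : Fin n} (h : v ∈ per f) : f v ∈ per f := by
  obtain ⟨t, ht, hv⟩ := mem_per.mp h
  exact mem_per.mpr ⟨t, ht, by rw [← Function.iterate_succ_apply, Function.iterate_succ_apply', hv]⟩

lemma per_injOn : Set.InjOn f (per f) := by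
  intro a ha b hb hab
  obtain ⟨s, hs, has⟩ := mem_per.mp ha
  obtain ⟨t, ht, hbt⟩ := mem_per.mp hb
  have hA : f^[s * t] a = a := by
    rw [Function.iterate_mul]
    exact Function.iterate_fixed has t
  have hB : f^[s * t] b = b := by
    rw [mul_comm, Function.iterate_mul]
    exact Function.iterate_fixed hbt s
  have hst : 0 < s * t := Nat.mul_pos hs ht
  calc a = f^[s*t] a := hA.symm
    _ = f^[s*t - 1] (f a) := by rw [← Function.iterate_succ_apply]; congr 1; omega
    _ = f^[s*t - 1] (f b) := by rw [hab]
    _ = f^[s*t] b := by rw [← Function.iterate_succ_apply]; congr 1; omega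
    _ = b := hB

lemma per_surjOn {v : Fin n} (h : v ∈ per f) : ∃ w ∈ per f, f w = v := by
  obtain ⟨t, ht, hv⟩ := mem_per.mp h
  refine ⟨f^[t-1] v, ?_, ?_⟩
  · refine mem_per.mpr ⟨t, ht, ?_⟩
    rw [← Function.iterate_add_apply, show t + (t-1) = (t-1) + t by omega,
      Function.iterate_add_apply, hv]
  · rw [← Function.iterate_succ_apply' f (t-1) v, show (t - 1).succ = t by omega]
    exact hv

lemma reach_per (v : Fin n) : ∃ j, f^[j] v ∈ per f := by
  obtain ⟨i, j, hij, hfij⟩ := Fintype.exists_ne_map_eq_of_card_lt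
    (fun i : Fin (n+1) => f^[(i:ℕ)] v) (by simp)
  rcases Nat.lt_or_ge (i:ℕ) (j:ℕ) with h | h
  · exact ⟨i, mem_per.mpr ⟨(j:ℕ) - i, by omega, by
      rw [← Function.iterate_add_apply, show (j:ℕ) - i + i = j by omega, hfij]⟩⟩
  · have hij' : (j:ℕ) < i := by
      rcases Nat.lt_or_ge (j:ℕ) (i:ℕ) with h' | h'
      · exact h'
      · exact absurd (Fin.ext (le_antisymm h' h)) hij
    exact ⟨j, mem_per.mpr ⟨(i:ℕ) - j, by omega, by
      rw [← Function.iterate_add_apply, show (i:ℕ) - j + j = i by omega, hfij.symm]⟩⟩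

lemma per_nonempty (hn : 0 < n) : (per f).Nonempty := by
  obtain ⟨j, hj⟩ := reach_per (f := f) ⟨0, hn⟩
  exact ⟨_, hj⟩

/-- Cancellation along orbits inside a set on which `f` is injective. -/
lemma cancel_orbit {A : Set (Fin n)} (hinj : Set.InjOn f A) (hmaps : Set.MapsTo f A A)
    {v w : Fin n} (hv : v ∈ A) (hw : w ∈ A) :
    ∀ i, f^[i] v = f^[i] w → v = w := by
  intro i
  induction i with
  | zero => simp
  | succ i ih =>
    intro h
    rw [Function.iterate_succ_apply', Function.iterate_succ_apply'] at h
    exact ih (hinj (hmaps.iterate i hv) (hmaps.iterate i hw) h)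

lemma per_of_mem_invariant {A : Set (Fin n)} (hinj : Set.InjOn f A) (hmaps : Set.MapsTo f A A)
    {v : Fin n} (hv : v ∈ A) : v ∈ per f := by
  obtain ⟨i, j, hij, hfij⟩ := Fintype.exists_ne_map_eq_of_card_lt
    (fun i : Fin (n+1) => f^[(i:ℕ)] v) (by simp)
  wlog h : (i:ℕ) < (j:ℕ) generalizing i j
  · refine this j i hij.symm hfij.symm ?_
    rcases Nat.lt_or_ge (j:ℕ) (i:ℕ) with h' | h'
    · exact h'
    · exact absurd (Fin.ext (le_antisymm h' (by omega))) hij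
  · refine mem_per.mpr ⟨(j:ℕ) - i, by omega, ?_⟩
    have : f^[(i:ℕ)] (f^[(j:ℕ)-i] v) = f^[(i:ℕ)] v := by
      rw [← Function.iterate_add_apply, show (i:ℕ) + ((j:ℕ) - i) = j by omega]
      exact hfij.symm
    exact cancel_orbit hinj hmaps (hmaps.iterate _ hv) hv (i:ℕ) this

lemma getElem_idx_congr {α : Type*} {l : List α} {i j : ℕ} (hij : i = j) (h : i < l.length) :
    l[i] = l[j]'(hij ▸ h) := by subst hij; rfl

/-! ### From a rooted tree (with a marked vertex) to a function -/

section FromTree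

/-- The path from `b` to the root, as a list. -/
noncomputable def pathList (hp : Conv p r) (b : Fin n) : List (Fin n) :=
  (List.range (ht hp b + 1)).map (fun i => p^[i] b)

variable {hp : Conv p r} {b : Fin n}

lemma pl_length (hp : Conv p r) (b : Fin n) : (pathList hp b).length = ht hp b + 1 := by simp [pathList]

lemma pl_getElem {i : ℕ} (h : i < (pathList hp b).length) :
    (pathList hp b)[i] = p^[i] b := by
  simp only [pathList, List.getElem_map, List.getElem_range]

lemma pl_mem {v : Fin n} : v ∈ pathList hp b ↔ ∃ i ≤ ht hp b, p^[i] b = v := by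
  simp only [pathList, List.mem_map, List.mem_range]
  constructor
  · rintro ⟨i, hi, rfl⟩; exact ⟨i, by omega, rfl⟩
  · rintro ⟨i, hi, rfl⟩; exact ⟨i, by omega, rfl⟩

lemma pl_nodup (hfix : p r = r) : (pathList hp b).Nodup := by
  refine List.Nodup.map_on ?_ List.nodup_range
  intro i hi j hj hij
  rw [List.mem_range] at hi hj
  by_contra hne
  rcases Nat.lt_or_ge i j with h | h
  · exact orbit_inj hfix hp h (by omega) hij
  · exact orbit_inj hfix hp (by omega) (by omega) hij.symm

lemma pl_root_mem : r ∈ pathList hp b :=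
  pl_mem.mpr ⟨ht hp b, le_rfl, ht_spec hp b⟩

/-- The sorted list of path vertices. -/
noncomputable def sortedList (hp : Conv p r) (b : Fin n) : List (Fin n) :=
  Finset.sort (pathList hp b).toFinset (· ≤ ·)

lemma sl_length (hfix : p r = r) : (sortedList hp b).length = (pathList hp b).length := by
  rw [sortedList, Finset.length_sort, List.toFinset_card_of_nodup (pl_nodup hfix)]

lemma sl_mem {v : Fin n} : v ∈ sortedList hp b ↔ v ∈ pathList hp b := by
  rw [sortedList, Finset.mem_sort, List.mem_toFinset]

/-- Joyal's bijection: the function associated to a doubly rooted tree. -/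
noncomputable def treeFun (hp : Conv p r) (b : Fin n) : Fin n → Fin n := fun v =>
  if v ∈ pathList hp b then
    (pathList hp b).getD ((sortedList hp b).idxOf v) v
  else p v

lemma tf_off {v : Fin n} (h : v ∉ pathList hp b) : treeFun hp b v = p v := by
  rw [treeFun, if_neg h]

lemma sl_nodup : (sortedList hp b).Nodup := Finset.sort_nodup _ _

lemma tf_on_sorted (hfix : p r = r) {i : ℕ} (h : i < (sortedList hp b).length) :
    treeFun hp b ((sortedList hp b)[i]) = (pathList hp b)[i]'(by
      rw [← sl_length hfix]; exact h) := by
  have hmem : (sortedList hp b)[i] ∈ pathList hp b :=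
    (sl_mem (hp := hp)).mp (List.getElem_mem h)
  rw [treeFun, if_pos hmem,
    List.Nodup.idxOf_getElem (sl_nodup (hp := hp) (b := b)) i h,
    List.getD_eq_getElem _ _ (by rw [← sl_length hfix]; exact h)]

lemma tf_mem (hfix : p r = r) {v : Fin n} (h : v ∈ pathList hp b) :
    treeFun hp b v =
      (pathList hp b)[(sortedList hp b).idxOf v]'(by
        rw [← sl_length hfix]
        exact List.idxOf_lt_length_iff.mpr ((sl_mem (hp := hp)).mpr h)) := by
  rw [treeFun, if_pos h, List.getD_eq_getElem]

lemma tf_maps (hfix : p r = r) {v : Fin n} (h : v ∈ pathList hp b) :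
    treeFun hp b v ∈ pathList hp b := by
  rw [tf_mem hfix h]
  exact List.getElem_mem _

lemma tf_injOn (hfix : p r = r) : Set.InjOn (treeFun hp b) {v | v ∈ pathList hp b} := by
  intro v hv w hw hvw
  rw [tf_mem hfix hv, tf_mem hfix hw] at hvw
  have h1 := (pl_nodup (hp := hp) (b := b) hfix).getElem_inj_iff.mp hvw
  have hv' : (sortedList hp b).idxOf v < (sortedList hp b).length :=
    List.idxOf_lt_length_iff.mpr ((sl_mem (hp := hp)).mpr hv)
  have hw' : (sortedList hp b).idxOf w < (sortedList hp b).length :=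
    List.idxOf_lt_length_iff.mpr ((sl_mem (hp := hp)).mpr hw)
  calc v = (sortedList hp b)[(sortedList hp b).idxOf v] := (List.getElem_idxOf hv').symm
    _ = (sortedList hp b)[(sortedList hp b).idxOf w] := by congr 1
    _ = w := List.getElem_idxOf hw'

/-- The periodic points of `treeFun` are exactly the path vertices. -/
lemma per_treeFun (hfix : p r = r) : per (treeFun hp b) = (pathList hp b).toFinset := by
  apply Finset.ext
  intro v
  rw [List.mem_toFinset]
  constructor
  · -- periodic → on path
    intro hper
    by_contra hnot
    obtain ⟨t, htpos, hfixv⟩ := mem_per.mp hper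
    -- iterates agree with p while off the path
    have agree : ∀ (j : ℕ) (w : Fin n), (∀ i, i < j → p^[i] w ∉ pathList hp b) →
        (treeFun hp b)^[j] w = p^[j] w := by
      intro j
      induction j with
      | zero => intro w _; simp
      | succ j ih =>
        intro w hw
        rw [Function.iterate_succ_apply, Function.iterate_succ_apply,
          tf_off (by simpa using hw 0 (by omega))]
        exact ih (p w) (fun i hi => by
          rw [← Function.iterate_succ_apply]
          exact hw (i+1) (by omega))
    -- first index whose p-iterate is on the path
    have hex : ∃ i, p^[i] v ∈ pathList hp b :=
      ⟨ht hp v, by rw [ht_spec]; exact pl_root_mem (hp := hp) (b := b)⟩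
    classical
    set m := Nat.find hex with hm
    have hmem : p^[m] v ∈ pathList hp b := Nat.find_spec hex
    have hmin : ∀ i, i < m → p^[i] v ∉ pathList hp b := fun i hi => Nat.find_min hex hi
    have h1 : (treeFun hp b)^[m] v ∈ pathList hp b := by rw [agree m v hmin]; exact hmem
    have stay : ∀ j, (treeFun hp b)^[m + j] v ∈ pathList hp b := by
      intro j
      induction j with
      | zero => simpa using h1
      | succ j ih =>
        rw [show m + (j+1) = (m+j) + 1 by omega, Function.iterate_succ_apply']
        exact tf_maps hfix ih
    have hper' : (treeFun hp b)^[t * (m + 1)] v = v := by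
      rw [Function.iterate_mul]
      exact Function.iterate_fixed hfixv _
    have : v ∈ pathList hp b := by
      have hmle : m ≤ t * (m + 1) := by
        have := Nat.le_mul_of_pos_left (m + 1) htpos
        omega
      have := stay (t * (m+1) - m)
      rwa [show m + (t * (m+1) - m) = t * (m+1) by omega, hper'] at this
    exact hnot this
  · intro hv
    exact per_of_mem_invariant (tf_injOn hfix)
      (fun w hw => tf_maps hfix hw) hv

end FromTree

/-! ### From a function to a rooted tree with marked vertex -/

section ToTree

noncomputable def perList (f : Fin n → Fin n) : List (Fin n) :=
  Finset.sort (per f) (· ≤ ·)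

noncomputable def cycList (f : Fin n → Fin n) : List (Fin n) :=
  (perList f).map f

variable (f : Fin n → Fin n)

lemma cl_length : (cycList f).length = (perList f).length := by simp [cycList]

lemma cl_nodup : (cycList f).Nodup :=
  List.Nodup.map_on
    (fun x hx y hy hxy => per_injOn ((Finset.mem_sort _).mp hx) ((Finset.mem_sort _).mp hy) hxy)
    (Finset.sort_nodup _ _)

lemma cl_mem {v : Fin n} : v ∈ cycList f ↔ v ∈ per f := by
  rw [cycList]
  constructor
  · rintro h
    obtain ⟨w, hw, rfl⟩ := List.mem_map.mp h
    exact per_maps ((Finset.mem_sort _).mp hw)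
  · intro h
    obtain ⟨w, hw, rfl⟩ := per_surjOn h
    exact List.mem_map.mpr ⟨w, (Finset.mem_sort _).mpr hw, rfl⟩

lemma cl_pos (hn : 0 < n) : 0 < (cycList f).length := by
  rw [cl_length, perList, Finset.length_sort]
  exact Finset.card_pos.mpr (per_nonempty hn)

noncomputable def froot (hn : 0 < n) : Fin n := (cycList f).getD ((cycList f).length - 1) ⟨0, hn⟩

noncomputable def fbase (hn : 0 < n) : Fin n := (cycList f).getD 0 ⟨0, hn⟩

noncomputable def fparent : Fin n → Fin n := fun v =>
  if v ∈ cycList f then (cycList f).getD ((cycList f).idxOf v + 1) v else f v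

lemma froot_eq (hn : 0 < n) :
    froot f hn = (cycList f)[(cycList f).length - 1]'(by have := cl_pos f hn; omega) :=
  List.getD_eq_getElem _ _ _

lemma fbase_eq (hn : 0 < n) : fbase f hn = (cycList f)[0]'(cl_pos f hn) :=
  List.getD_eq_getElem _ _ _

lemma fparent_getElem {i : ℕ} (h : i + 1 < (cycList f).length) :
    fparent f ((cycList f)[i]'(by omega)) = (cycList f)[i+1] := by
  rw [fparent, if_pos (List.getElem_mem _), List.Nodup.idxOf_getElem (cl_nodup f) i (by omega),
    List.getD_eq_getElem _ _ h]

lemma fparent_off {v : Fin n} (h : v ∉ cycList f) : fparent f v = f v := by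
  rw [fparent, if_neg h]

lemma fparent_root_fix (hn : 0 < n) : fparent f (froot f hn) = froot f hn := by
  rw [froot_eq]
  rw [fparent, if_pos (List.getElem_mem _),
    List.Nodup.idxOf_getElem (cl_nodup f) _ _]
  exact List.getD_eq_default _ _ (by have := cl_pos f hn; omega)

lemma fparent_chain : ∀ (m i : ℕ) (h : i + m < (cycList f).length),
    (fparent f)^[m] ((cycList f)[i]'(by omega)) = (cycList f)[i + m] := by
  intro m
  induction m with
  | zero => intro i h; simp
  | succ m ih =>
    intro i h
    rw [Function.iterate_succ_apply, fparent_getElem f (by omega)]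
    exact (ih (i+1) (by omega)).trans (getElem_idx_congr (by omega) (by omega))

lemma conv_fparent (hn : 0 < n) : Conv (fparent f) (froot f hn) := by
  have on_cyc : ∀ v ∈ cycList f, ∃ k, (fparent f)^[k] v = froot f hn := by
    intro v hv
    have hidx : (cycList f).idxOf v < (cycList f).length := List.idxOf_lt_length_iff.mpr hv
    refine ⟨(cycList f).length - 1 - (cycList f).idxOf v, ?_⟩
    have hch := fparent_chain f ((cycList f).length - 1 - (cycList f).idxOf v)
      ((cycList f).idxOf v) (by omega)
    rw [List.getElem_idxOf hidx] at hch
    rw [froot_eq, hch]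
    exact getElem_idx_congr (by omega) (by omega)
  intro v
  obtain ⟨j, hj⟩ := reach_per (f := f) v
  clear hj
  -- strong induction on steps to reach the periodic set
  suffices H : ∀ (j : ℕ) (v : Fin n), f^[j] v ∈ per f → ∃ k, (fparent f)^[k] v = froot f hn by
    obtain ⟨j, hj⟩ := reach_per (f := f) v
    exact H j v hj
  intro j
  induction j with
  | zero =>
    intro v hv
    exact on_cyc v ((cl_mem f).mpr (by simpa using hv))
  | succ j ih =>
    intro v hv
    by_cases hmem : v ∈ cycList f
    · exact on_cyc v hmem
    · obtain ⟨k, hk⟩ := ih (f v) (by rwa [← Function.iterate_succ_apply])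
      exact ⟨k + 1, by rw [Function.iterate_succ_apply, fparent_off f hmem]; exact hk⟩

end ToTree

/-! ### Round trips -/

section RT

variable (f : Fin n → Fin n) (hn : 0 < n)

lemma rtB_chain : ∀ i (h : i < (cycList f).length),
    (fparent f)^[i] (fbase f hn) = (cycList f)[i] := by
  intro i h
  rw [fbase_eq f hn]
  exact (fparent_chain f i 0 (by omega)).trans (getElem_idx_congr (by omega) (by omega))

lemma rtB_ht : ht (conv_fparent f hn) (fbase f hn) = (cycList f).length - 1 := by
  have hpos := cl_pos f hn
  have hle : ht (conv_fparent f hn) (fbase f hn) ≤ (cycList f).length - 1 := by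
    apply ht_min
    rw [rtB_chain f hn _ (by omega)]
    exact (froot_eq f hn).symm
  have hge : ¬ ht (conv_fparent f hn) (fbase f hn) < (cycList f).length - 1 := by
    intro hlt
    have h1 := ht_spec (conv_fparent f hn) (fbase f hn)
    rw [rtB_chain f hn _ (by omega)] at h1
    have h2 := h1.trans (froot_eq f hn)
    have := (cl_nodup f).getElem_inj_iff.mp h2
    omega
  omega

lemma rtB_pathList : pathList (conv_fparent f hn) (fbase f hn) = cycList f := by
  have hpos := cl_pos f hn
  apply List.ext_getElem
  · rw [pl_length, rtB_ht f hn]; omega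
  · intro i h1 h2
    rw [pl_getElem h1, rtB_chain f hn i h2]

lemma cl_toFinset : (cycList f).toFinset = per f := by
  apply Finset.ext
  intro v
  rw [List.mem_toFinset, cl_mem]

lemma rtB_sortedList : sortedList (conv_fparent f hn) (fbase f hn) = perList f := by
  rw [sortedList, rtB_pathList f hn, cl_toFinset, perList]

lemma joyal_right_inv : treeFun (conv_fparent f hn) (fbase f hn) = f := by
  funext v
  by_cases hv : v ∈ pathList (conv_fparent f hn) (fbase f hn)
  · rw [tf_mem (fparent_root_fix f hn) hv]
    have hv' : v ∈ per f := (cl_mem f).mp (by rwa [← rtB_pathList f hn])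
    have hv'' : v ∈ perList f := (Finset.mem_sort _).mpr hv'
    have hidx : (perList f).idxOf v < (perList f).length := List.idxOf_lt_length_iff.mpr hv''
    simp only [rtB_sortedList f hn, rtB_pathList f hn]
    have : (cycList f)[(perList f).idxOf v]'(by rwa [cl_length]) = f v := by
      simp only [cycList, List.getElem_map]
      rw [List.getElem_idxOf hidx]
    -- getElem proof transport
    exact this
  · rw [tf_off hv, fparent_off f (by rwa [← rtB_pathList f hn])]

end RT

section RTA

variable {p : Fin n → Fin n} {r : Fin n}

lemma rtA_perList (hfix : p r = r) (hp : Conv p r) (b : Fin n) :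
    perList (treeFun hp b) = sortedList hp b := by
  rw [perList, per_treeFun hfix, sortedList]

lemma rtA_cycList (hfix : p r = r) (hp : Conv p r) (b : Fin n) :
    cycList (treeFun hp b) = pathList hp b := by
  apply List.ext_getElem
  · rw [cl_length, rtA_perList hfix hp b, sl_length hfix]
  · intro i h1 h2
    simp only [cycList, List.getElem_map]
    have hi : i < (sortedList hp b).length := by
      rw [← rtA_perList hfix hp b]
      rw [cl_length] at h1
      exact h1
    have := tf_on_sorted (hp := hp) (b := b) hfix hi
    simp only [rtA_perList hfix hp b]
    exact this

lemma rtA_fbase (hfix : p r = r) (hp : Conv p r) (b : Fin n) (hn : 0 < n) :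
    fbase (treeFun hp b) hn = b := by
  rw [fbase_eq _ hn]
  simp only [rtA_cycList hfix hp b]
  rw [pl_getElem]
  simp

lemma rtA_froot (hfix : p r = r) (hp : Conv p r) (b : Fin n) (hn : 0 < n) :
    froot (treeFun hp b) hn = r := by
  rw [froot_eq _ hn]
  simp only [rtA_cycList hfix hp b]
  rw [pl_getElem, show (pathList hp b).length - 1 = ht hp b by rw [pl_length]; omega]
  exact ht_spec hp b

lemma rtA_fparent (hfix : p r = r) (hp : Conv p r) (b : Fin n) :
    fparent (treeFun hp b) = p := by
  funext v
  by_cases hv : v ∈ pathList hp b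
  · have hcl : v ∈ cycList (treeFun hp b) := by rw [rtA_cycList hfix hp b]; exact hv
    rw [fparent, if_pos hcl]
    simp only [rtA_cycList hfix hp b]
    have hidx : (pathList hp b).idxOf v < (pathList hp b).length :=
      List.idxOf_lt_length_iff.mpr hv
    by_cases hlast : (pathList hp b).idxOf v + 1 < (pathList hp b).length
    · rw [List.getD_eq_getElem _ _ hlast, pl_getElem]
      have hv' : v = p^[(pathList hp b).idxOf v] b := by
        rw [← pl_getElem (hp := hp) (b := b) hidx, List.getElem_idxOf hidx]
      rw [Function.iterate_succ_apply' p]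
      exact congrArg p hv'.symm
    · rw [List.getD_eq_default _ _ (by omega)]
      have hvr : v = r := by
        have h1 : (pathList hp b).idxOf v = (pathList hp b).length - 1 := by omega
        calc v = (pathList hp b)[(pathList hp b).idxOf v] := (List.getElem_idxOf hidx).symm
          _ = (pathList hp b)[(pathList hp b).length - 1]'(by omega) :=
            getElem_idx_congr h1 hidx
          _ = p^[(pathList hp b).length - 1] b := pl_getElem _
          _ = r := by
            rw [show (pathList hp b).length - 1 = ht hp b by rw [pl_length]; omega]
            exact ht_spec hp b
      rw [hvr, hfix]
  · have hcl : v ∉ cycList (treeFun hp b) := by rw [rtA_cycList hfix hp b]; exact hv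
    rw [fparent_off _ hcl, tf_off hv]

end RTA

/-- Joyal's bijection. -/
noncomputable def joyalEquiv (hn : 0 < n) :
    ({x : (Fin n → Fin n) × Fin n // x.1 x.2 = x.2 ∧ Conv x.1 x.2} × Fin n) ≃
      (Fin n → Fin n) where
  toFun x := treeFun x.1.2.2 x.2
  invFun f := (⟨(fparent f, froot f hn), fparent_root_fix f hn, conv_fparent f hn⟩, fbase f hn)
  left_inv := by
    rintro ⟨⟨⟨p, r⟩, hfix, hconv⟩, b⟩
    simp only [Prod.mk.injEq, Subtype.mk.injEq]
    exact ⟨⟨rtA_fparent hfix hconv b, rtA_froot hfix hconv b hn⟩, rtA_fbase hfix hconv b hn⟩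
  right_inv := fun f => joyal_right_inv f hn


end Cayley

/-- Cayley's formula: the number of labeled trees (connected acyclic simple
graphs) on `m + 1` vertices is `(m + 1) ^ (m - 1)`. -/
theorem cayley_formula (m : ℕ) :
    Nat.card {G : SimpleGraph (Fin (m + 1)) // G.Connected ∧ G.IsAcyclic} =
      (m + 1) ^ (m - 1) := by
  have hn : 0 < m + 1 := Nat.succ_pos m
  have e2 := (Equiv.prodCongr (Cayley.rootedEquiv (m+1)) (Equiv.refl (Fin (m+1)))).symm.trans
    (Cayley.joyalEquiv hn)
  have hcard := Nat.card_congr e2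
  rw [Nat.card_prod, Nat.card_prod, Nat.card_fun, Nat.card_eq_fintype_card (α := Fin (m+1)),
    Fintype.card_fin] at hcard
  set t := Nat.card {G : SimpleGraph (Fin (m + 1)) // G.Connected ∧ G.IsAcyclic} with ht
  rcases Nat.eq_zero_or_pos m with rfl | hm
  · simpa using hcard
  · have hexp : (m+1) ^ (m+1) = (m+1) ^ (m-1) * (m+1) * (m+1) := by
      rw [← pow_succ, ← pow_succ]
      congr 1
      omega
    rw [hexp] at hcard
    have h1 := Nat.eq_of_mul_eq_mul_right hn hcard
    exact Nat.eq_of_mul_eq_mul_right hn h1
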